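/- arXiv:math/0405117 — 2 statements merged into one kernel-verified Lean document; each statement's English description precedes it below -/
import Mathlib

section
/- Let R be a Dedekind domain with countably generated quotient field Q, and let B be a torsion-free reduced R-module. Suppose M = ⋃_{ν<μ} M_ν is a continuous increasing chain of submodules indexed by a limit ordinal μ, with M_0 = 0 and M_{ν+1}/M_ν ≅ B for all ν < μ. Then M is torsion-free and reduced. -/
open CategoryTheory

universe u

/-- `Ext¹_R(A,B) = 0`, via Mathlib's derived-functor `Ext` for the abelian category of `R`-modules. -/
def Ext1Zero (R : Type u) [Ring R] (A : Type u) [AddCommGroup A] [Module R A]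
    (B : Type u) [AddCommGroup B] [Module R B] : Prop :=
  Subsingleton (((Ext ℤ (ModuleCat.{u} R) 1).obj
    (Opposite.op (ModuleCat.of R A))).obj (ModuleCat.of R B))
/-- Let `R` be a Dedekind domain whose quotient field is countably generated as an
`R`-module, and `B` a torsion-free reduced module.  If `M` is the union of a continuous
increasing chain of submodules `(A ν)_{ν<μ}` (`μ` a limit ordinal) with `A 0 = 0` and all
successive quotients isomorphic to `B`, then `M` is torsion-free and reduced. -/
theorem torsionFree_reduced_of_chain (R : Type u) [CommRing R] [IsDomain R]
    [IsDedekindDomain R]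
    (hQcg : ∃ s : Set (FractionRing R), s.Countable ∧ Submodule.span R s = ⊤)
    (B : Type u) [AddCommGroup B] [Module R B]
    (hBtf : NoZeroSMulDivisors R B)
    (hBred : ∀ f : FractionRing R →ₗ[R] B, f = 0)
    (μ : Ordinal.{u}) (hμ : Order.IsSuccLimit μ)
    (M : Type u) [AddCommGroup M] [Module R M]
    (A : Ordinal.{u} → Submodule R M) (hmono : Monotone A) (h0 : A 0 = ⊥)
    (hcont : ∀ σ < μ, Order.IsSuccLimit σ → A σ = ⨆ ν < σ, A ν)
    (hquot : ∀ ν < μ,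
      Nonempty ((↥(A (ν + 1)) ⧸ (A ν).comap (A (ν + 1)).subtype) ≃ₗ[R] B))
    (hunion : ⨆ ν < μ, A ν = ⊤) :
    NoZeroSMulDivisors R M ∧ ∀ f : FractionRing R →ₗ[R] M, f = 0 := by
  classical
  haveI := hBtf
  -- membership in a bounded sup of the chain
  have mem_bsup : ∀ (σ : Ordinal.{u}), 0 < σ → ∀ m : M, m ∈ (⨆ ν < σ, A ν) →
      ∃ ν < σ, m ∈ A ν := by
    intro σ hσ m hm
    rw [iSup_subtype'] at hm
    haveI : Nonempty {ν : Ordinal.{u} // ν < σ} := ⟨⟨0, hσ⟩⟩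
    have hdir : Directed (· ≤ ·) (fun i : {ν : Ordinal.{u} // ν < σ} => A i.1) :=
      Monotone.directed_le (fun a b h => hmono h)
    obtain ⟨⟨ν, hν⟩, h⟩ := (Submodule.mem_iSup_of_directed _ hdir).mp hm
    exact ⟨ν, hν, h⟩
  have succ_lt : ∀ τ : Ordinal.{u}, τ < τ + 1 := by
    intro τ
    rw [Ordinal.add_one_eq_succ]
    exact Order.lt_succ τ
  -- every nonzero element first appears at a successor stage
  have key : ∀ m : M, m ≠ 0 → ∃ τ : Ordinal.{u}, τ + 1 < μ ∧ m ∈ A (τ + 1) ∧ m ∉ A τ := by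
    intro m hm
    have hex : Set.Nonempty {ν : Ordinal.{u} | ν < μ ∧ m ∈ A ν} := by
      have hmtop : m ∈ (⨆ ν < μ, A ν) := by rw [hunion]; trivial
      obtain ⟨ν, hν, h⟩ := mem_bsup μ hμ.pos m hmtop
      exact ⟨ν, hν, h⟩
    set S : Set Ordinal.{u} := {ν | ν < μ ∧ m ∈ A ν} with hS
    have hσS : wellFounded_lt.min S hex ∈ S := wellFounded_lt.min_mem S hex
    set σ := wellFounded_lt.min S hex with hσdef
    have hmin : ∀ ν ∈ S, ¬ ν < σ := fun ν hν => wellFounded_lt.not_lt_min S hν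
    rcases Ordinal.zero_or_succ_or_isSuccLimit σ with h | ⟨τ, hτ⟩ | hlim
    · exfalso
      have := hσS.2
      rw [h, h0, Submodule.mem_bot] at this
      exact hm this
    · have hστ : σ = τ + 1 := by rw [← hτ, Ordinal.add_one_eq_succ]
      refine ⟨τ, by rw [← hστ]; exact hσS.1, by rw [← hστ]; exact hσS.2, ?_⟩
      intro hmem
      exact hmin τ ⟨lt_trans (by rw [hστ] at hσS ⊢; exact succ_lt τ) hσS.1, hmem⟩
        (by rw [hστ]; exact succ_lt τ)
    · exfalso
      have hcσ := hcont σ hσS.1 hlim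
      have hmσ : m ∈ (⨆ ν < σ, A ν) := by rw [← hcσ]; exact hσS.2
      obtain ⟨ν, hν, h⟩ := mem_bsup σ hlim.pos m hmσ
      exact hmin ν ⟨lt_trans hν hσS.1, h⟩ hν
  -- torsion-freeness
  have tf : NoZeroSMulDivisors R M := by
    refine ⟨fun {r m} hrm => ?_⟩
    by_contra hcon
    push_neg at hcon
    obtain ⟨hr, hm⟩ := hcon
    obtain ⟨τ, hτ1, hmem, hnot⟩ := key m hm
    have hτ : τ < μ := lt_trans (succ_lt τ) hτ1
    obtain ⟨e⟩ := hquot τ hτ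
    set N := (A τ).comap (A (τ + 1)).subtype with hN
    set x : A (τ + 1) := ⟨m, hmem⟩ with hx
    have hq : Submodule.Quotient.mk (p := N) x ≠ 0 := by
      rw [Ne, Submodule.Quotient.mk_eq_zero]
      exact hnot
    have hrx : r • x = 0 := by
      apply Subtype.ext
      simpa using hrm
    have h2 : r • (Submodule.Quotient.mk (p := N) x) = 0 := by
      rw [← Submodule.Quotient.mk_smul, hrx]
      rfl
    have h3 : r • e (Submodule.Quotient.mk (p := N) x) = 0 := by
      rw [← map_smul, h2, map_zero]
    rcases smul_eq_zero.mp h3 with h | h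
    · exact hr h
    · exact hq (e.map_eq_zero_iff.mp h)
  -- saturation of each stage
  have sat : ∀ ν, ν < μ → ∀ r : R, r ≠ 0 → ∀ m : M, r • m ∈ A ν → m ∈ A ν := by
    intro ν hν r hr m hrm
    by_contra hm'
    have hm : m ≠ 0 := fun h => hm' (h ▸ (A ν).zero_mem)
    obtain ⟨τ, hτ1, hmem, hnot⟩ := key m hm
    have hτ : τ < μ := lt_trans (succ_lt τ) hτ1
    have hντ : ν ≤ τ := by
      by_contra hc
      push_neg at hc
      have : τ + 1 ≤ ν := by
        rw [Ordinal.add_one_eq_succ, Order.succ_le_iff]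
        exact hc
      exact hm' (hmono this hmem)
    obtain ⟨e⟩ := hquot τ hτ
    set N := (A τ).comap (A (τ + 1)).subtype with hN
    set x : A (τ + 1) := ⟨m, hmem⟩ with hx
    have hq : Submodule.Quotient.mk (p := N) x ≠ 0 := by
      rw [Ne, Submodule.Quotient.mk_eq_zero]
      exact hnot
    have h2 : r • (Submodule.Quotient.mk (p := N) x) = 0 := by
      rw [← Submodule.Quotient.mk_smul, Submodule.Quotient.mk_eq_zero]
      show (r • x : A (τ + 1)).1 ∈ A τ
      exact hmono hντ hrm
    have h3 : r • e (Submodule.Quotient.mk (p := N) x) = 0 := by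
      rw [← map_smul, h2, map_zero]
    rcases smul_eq_zero.mp h3 with h | h
    · exact hr h
    · exact hq (e.map_eq_zero_iff.mp h)
  haveI := tf
  refine ⟨tf, fun f => ?_⟩
  have hsmul : ∀ (a : R) (b : (nonZeroDivisors R)),
      (b : R) • f (IsLocalization.mk' (FractionRing R) a b) = a • f 1 := by
    intro a b
    rw [← map_smul, Algebra.smul_def, mul_comm, IsLocalization.mk'_spec,
      Algebra.algebraMap_eq_smul_one, map_smul]
  by_cases hf1 : f 1 = 0
  · ext q
    obtain ⟨⟨a, b⟩, rfl⟩ := IsLocalization.mk'_surjective (nonZeroDivisors R) q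
    have hb : (b : R) ≠ 0 := nonZeroDivisors.coe_ne_zero b
    have h1 := hsmul a b
    rw [hf1, smul_zero] at h1
    rcases smul_eq_zero.mp h1 with h | h
    · exact absurd h hb
    · simpa using h
  · exfalso
    obtain ⟨τ, hτ1, hmem, hnot⟩ := key (f 1) hf1
    have hτ : τ < μ := lt_trans (succ_lt τ) hτ1
    have hrange : ∀ q, f q ∈ A (τ + 1) := by
      intro q
      obtain ⟨⟨a, b⟩, rfl⟩ := IsLocalization.mk'_surjective (nonZeroDivisors R) q
      have hb : (b : R) ≠ 0 := nonZeroDivisors.coe_ne_zero b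
      apply sat (τ + 1) hτ1 (b : R) hb
      rw [hsmul a b]
      exact Submodule.smul_mem _ a hmem
    obtain ⟨e⟩ := hquot τ hτ
    set N := (A τ).comap (A (τ + 1)).subtype with hN
    let f' : FractionRing R →ₗ[R] A (τ + 1) := f.codRestrict (A (τ + 1)) hrange
    let g : FractionRing R →ₗ[R] B := e.toLinearMap ∘ₗ N.mkQ ∘ₗ f'
    have hg := hBred g
    have hg1 : g 1 = 0 := by rw [hg]; rfl
    have hmk : N.mkQ (f' 1) = 0 := by
      apply e.map_eq_zero_iff.mp
      exact hg1
    rw [Submodule.mkQ_apply, Submodule.Quotient.mk_eq_zero] at hmk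
    exact hnot hmk
end

section
/- Let R be a Dedekind domain, p a maximal ideal, and K a module with Ext¹_R(E(R/p), K) = 0 and Ext¹_R(J_p, K) = 0, where J_p is the p-adic completion of a free module over the localization R_p and there is an exact sequence 0 → J_p → Q^{(α)} → I_p → 0 with I_p a direct sum of copies of E(R/p) and α > 0. Then Ext¹_R(Q,K) = 0, i.e. K is cotorsion. -/
open CategoryTheory

universe u

section Helpers

variable {R : Type u} [CommRing R]

/-- Every short exact sequence `0 → K → X → A → 0` of type-`u` `R`-modules splits. -/
def SplitsAll (R : Type u) [CommRing R] (A K : Type u) [AddCommGroup A] [Module R A]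
    [AddCommGroup K] [Module R K] : Prop :=
  ∀ (X : Type u) (_ : AddCommGroup X) (_ : Module R X) (i : K →ₗ[R] X) (π : X →ₗ[R] A),
    Function.Injective i → Function.Surjective π →
      LinearMap.ker π = LinearMap.range i → ∃ s : A →ₗ[R] X, π ∘ₗ s = LinearMap.id

variable {A K X : Type u} [AddCommGroup A] [Module R A] [AddCommGroup K] [Module R K]
  [AddCommGroup X] [Module R X]

theorem exists_retraction (i : K →ₗ[R] X) (π : X →ₗ[R] A)
    (hi : Function.Injective i) (hker : LinearMap.ker π = LinearMap.range i)
    (s : A →ₗ[R] X) (hs : π ∘ₗ s = LinearMap.id) :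
    ∃ r : X →ₗ[R] K, r ∘ₗ i = LinearMap.id := by
  have hτ : ∀ x, x - s (π x) ∈ LinearMap.range i := by
    intro x
    rw [← hker, LinearMap.mem_ker, map_sub]
    have := LinearMap.congr_fun hs (π x)
    simp only [LinearMap.comp_apply, LinearMap.id_apply] at this
    rw [this, sub_self]
  let e := LinearEquiv.ofInjective i hi
  refine ⟨e.symm.toLinearMap ∘ₗ LinearMap.codRestrict (LinearMap.range i)
    (LinearMap.id - s ∘ₗ π) hτ, ?_⟩
  ext k
  have h0 : π (i k) = 0 := by
    have : i k ∈ LinearMap.ker π := by rw [hker]; exact ⟨k, rfl⟩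
    exact this
  simp only [LinearMap.comp_apply, LinearMap.codRestrict_apply, LinearMap.sub_apply,
    LinearMap.id_apply, LinearEquiv.coe_coe]
  have hval : (LinearMap.codRestrict (LinearMap.range i) (LinearMap.id - s ∘ₗ π) hτ) (i k)
      = e k := by
    apply Subtype.ext
    simp only [LinearMap.codRestrict_apply, LinearMap.sub_apply, LinearMap.id_apply,
      LinearMap.comp_apply, h0, map_zero, sub_zero]
    rfl
  rw [hval, e.symm_apply_apply]

theorem exists_section (i : K →ₗ[R] X) (π : X →ₗ[R] A)
    (hπ : Function.Surjective π) (hker : LinearMap.ker π = LinearMap.range i)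
    (r : X →ₗ[R] K) (hr : r ∘ₗ i = LinearMap.id) :
    ∃ s : A →ₗ[R] X, π ∘ₗ s = LinearMap.id := by
  let e := π.quotKerEquivOfSurjective hπ
  have hτ : LinearMap.ker π ≤ LinearMap.ker (LinearMap.id - i ∘ₗ r) := by
    rw [hker]
    rintro x ⟨k, rfl⟩
    have := LinearMap.congr_fun hr k
    simp only [LinearMap.comp_apply, LinearMap.id_apply] at this
    simp [LinearMap.mem_ker, this]
  refine ⟨Submodule.liftQ _ _ hτ ∘ₗ e.symm.toLinearMap, ?_⟩
  ext a
  obtain ⟨x, hx⟩ := Submodule.Quotient.mk_surjective _ (e.symm a)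
  have hea : e (Submodule.Quotient.mk x) = a := by rw [hx, e.apply_symm_apply]
  have hπx : π x = a := by
    have : e (Submodule.Quotient.mk x) = π x := rfl
    rw [← hea, this]
  have hix : π (i (r x)) = 0 := by
    have : i (r x) ∈ LinearMap.ker π := by rw [hker]; exact ⟨r x, rfl⟩
    exact this
  simp only [LinearMap.comp_apply, LinearMap.id_apply, LinearEquiv.coe_coe, ← hx,
    Submodule.liftQ_apply, LinearMap.sub_apply, map_sub, hπx, hix, sub_zero]

theorem SplitsAll.of_equiv {A' : Type u} [AddCommGroup A'] [Module R A']
    (e : A ≃ₗ[R] A') (h : SplitsAll R A K) : SplitsAll R A' K := by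
  intro X _ _ i π hi hπ hker
  obtain ⟨s, hs⟩ := h X ‹_› ‹_› i (e.symm.toLinearMap ∘ₗ π) hi
    (e.symm.surjective.comp hπ) (by
      rw [← hker]
      ext x
      simp [LinearMap.mem_ker])
  refine ⟨s ∘ₗ e.symm.toLinearMap, ?_⟩
  ext a
  have := LinearMap.congr_fun hs (e.symm a)
  simp only [LinearMap.comp_apply, LinearMap.id_apply, LinearEquiv.coe_coe] at this ⊢
  have h2 := congrArg e this
  simp only [e.apply_symm_apply] at h2
  exact h2

end Helpers

section KeyLemma

variable (R : Type u) [CommRing R]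

theorem ext1Zero_iff_splitsAll (A K : Type u) [AddCommGroup A] [Module R A]
    [AddCommGroup K] [Module R K] :
    (Subsingleton (((Ext ℤ (ModuleCat.{u} R) 1).obj
      (Opposite.op (ModuleCat.of R A))).obj (ModuleCat.of R K))) ↔ SplitsAll R A K := by
  classical
  let Aob := ModuleCat.of R A
  let Kob := ModuleCat.of R K
  let P : ProjectiveResolution Aob := ProjectiveResolution.of Aob
  let HC := P.complex.linearYonedaObj ℤ Kob
  -- the augmentation, seen as a map to `Aob`
  let ε : P.complex.X 0 ⟶ Aob := P.π.f 0
  have hεsurj : Function.Surjective ε :=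
    (ModuleCat.epi_iff_surjective (P.π.f 0)).1 inferInstance
  have hex0 : LinearMap.range (P.complex.d 1 0).hom = LinearMap.ker ε.hom :=
    (ShortComplex.moduleCat_exact_iff_range_eq_ker _).1 P.exact₀
  have hex1 : LinearMap.range (P.complex.d 2 1).hom = LinearMap.ker (P.complex.d 1 0).hom :=
    (ShortComplex.moduleCat_exact_iff_range_eq_ker _).1 (P.exact_succ 0)
  -- Step 1 : reduce to a lifting property along the resolution
  have step1 : (Subsingleton (((Ext ℤ (ModuleCat.{u} R) 1).obj
      (Opposite.op Aob)).obj Kob)) ↔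
      ∀ ψ : P.complex.X 1 ⟶ Kob, P.complex.d 2 1 ≫ ψ = 0 →
        ∃ χ : P.complex.X 0 ⟶ Kob, P.complex.d 1 0 ≫ χ = ψ := by
    have e1 : (((Ext ℤ (ModuleCat.{u} R) 1).obj (Opposite.op Aob)).obj Kob) ≅
        HC.homology 1 := P.isoExt 1 Kob
    have e1equiv : (((Ext ℤ (ModuleCat.{u} R) 1).obj (Opposite.op Aob)).obj Kob) ≃
        HC.homology 1 :=
      { toFun := e1.hom
        invFun := e1.inv
        left_inv := fun x => ConcreteCategory.congr_hom e1.hom_inv_id x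
        right_inv := fun x => ConcreteCategory.congr_hom e1.inv_hom_id x }
    rw [Equiv.subsingleton_congr e1equiv]
    have hzero : Subsingleton (HC.homology 1) ↔ Limits.IsZero (HC.homology 1) := by
      constructor
      · intro h; exact ModuleCat.isZero_of_subsingleton _
      · intro h
        refine ⟨fun x y => ?_⟩
        have hid : 𝟙 (HC.homology 1) = 0 := h.eq_of_src _ _
        calc x = (𝟙 (HC.homology 1)) x := rfl
          _ = (0 : HC.homology 1 ⟶ HC.homology 1) x := by rw [hid]
          _ = (0 : HC.homology 1 ⟶ HC.homology 1) y := rfl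
          _ = (𝟙 (HC.homology 1)) y := by rw [hid]
          _ = y := rfl
    rw [hzero, ← HC.exactAt_iff_isZero_homology,
      HC.exactAt_iff' 0 1 2 (by simp) (by simp),
      ShortComplex.moduleCat_exact_iff]
    have hg : ∀ ψ : P.complex.X 1 ⟶ Kob, (HC.sc' 0 1 2).g ψ = P.complex.d 2 1 ≫ ψ := by
      intro ψ
      show HC.d 1 2 ψ = _
      simp [HC, ChainComplex.linearYonedaObj]
      rfl
    have hf : ∀ χ : P.complex.X 0 ⟶ Kob, (HC.sc' 0 1 2).f χ = P.complex.d 1 0 ≫ χ := by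
      intro χ
      show HC.d 0 1 χ = _
      simp [HC, ChainComplex.linearYonedaObj]
      rfl
    constructor
    · intro h ψ hψ
      obtain ⟨χ, hχ⟩ := h ψ ((hg ψ).trans hψ)
      exact ⟨χ, (hf χ).symm.trans hχ⟩
    · intro h ψ hψ
      obtain ⟨χ, hχ⟩ := h ψ ((hg ψ).symm.trans hψ)
      exact ⟨χ, (hf χ).trans hχ⟩
  rw [step1]
  constructor
  -- Lifting property implies splitting
  · intro hlift X _ _ i π hi hπ hker
    haveI : Epi (ModuleCat.ofHom π : ModuleCat.of R X ⟶ Aob) :=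
      (ModuleCat.epi_iff_surjective _).2 hπ
    let g : P.complex.X 0 ⟶ ModuleCat.of R X :=
      Projective.factorThru ε (ModuleCat.ofHom π)
    let gL : P.complex.X 0 →ₗ[R] X := g.hom
    have hg : ∀ z, π (gL z) = ε z := by
      intro z
      have := ConcreteCategory.congr_hom (Projective.factorThru_comp ε (ModuleCat.ofHom π)) z
      exact this
    have hmem : ∀ y, gL (P.complex.d 1 0 y) ∈ LinearMap.range i := by
      intro y
      rw [← hker, LinearMap.mem_ker, hg]
      have : P.complex.d 1 0 y ∈ LinearMap.ker ε.hom := by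
        rw [← hex0]; exact ⟨y, rfl⟩
      exact this
    let eK := LinearEquiv.ofInjective i hi
    let ψL : P.complex.X 1 →ₗ[R] K :=
      eK.symm.toLinearMap ∘ₗ LinearMap.codRestrict (LinearMap.range i)
        (gL ∘ₗ (P.complex.d 1 0).hom)
        hmem
    have hiψ : ∀ y, i (ψL y) = gL (P.complex.d 1 0 y) := by
      intro y
      show i (eK.symm ⟨gL (P.complex.d 1 0 y), hmem y⟩) = _
      have := eK.apply_symm_apply ⟨gL (P.complex.d 1 0 y), hmem y⟩
      have h2 := congrArg (Subtype.val) this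
      exact h2
    obtain ⟨χ, hχ⟩ := hlift (ModuleCat.ofHom ψL) (by
      apply ModuleCat.hom_ext
      apply LinearMap.ext
      intro y
      apply hi
      show i (ψL (P.complex.d 2 1 y)) = i 0
      rw [hiψ, map_zero]
      have : P.complex.d 1 0 (P.complex.d 2 1 y) = 0 := by
        have := ConcreteCategory.congr_hom (P.complex.d_comp_d 2 1 0) y
        exact this
      rw [this, map_zero])
    let χL : P.complex.X 0 →ₗ[R] K := χ.hom
    have hχ' : ∀ y, χL (P.complex.d 1 0 y) = ψL y := fun y => ConcreteCategory.congr_hom hχ y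
    let h : P.complex.X 0 →ₗ[R] X := gL - i ∘ₗ χL
    have hkerh : LinearMap.ker ε.hom ≤ LinearMap.ker h := by
      intro z hz
      rw [← hex0] at hz
      obtain ⟨y, rfl⟩ := hz
      show gL (P.complex.d 1 0 y) - i (χL (P.complex.d 1 0 y)) = 0
      rw [hχ', hiψ, sub_self]
    let e2 := ε.hom.quotKerEquivOfSurjective hεsurj
    refine ⟨Submodule.liftQ _ h hkerh ∘ₗ e2.symm.toLinearMap, ?_⟩
    apply LinearMap.ext
    intro a
    obtain ⟨x0, hx0⟩ := Submodule.Quotient.mk_surjective _ (e2.symm a)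
    have hεx0 : ε x0 = a := by
      have : e2 (Submodule.Quotient.mk x0) = ε x0 := rfl
      rw [hx0, e2.apply_symm_apply] at this
      exact this.symm
    have hiz : π (i (χL x0)) = 0 := by
      have : i (χL x0) ∈ LinearMap.ker π := by rw [hker]; exact ⟨χL x0, rfl⟩
      exact this
    show π (Submodule.liftQ _ h hkerh (e2.symm a)) = a
    rw [← hx0, Submodule.liftQ_apply]
    show π (gL x0 - i (χL x0)) = a
    rw [map_sub, hg, hiz, sub_zero, hεx0]
  -- Splitting implies the lifting property
  · intro hsplit ψ hψ
    have hψ' : ∀ y, ψ (P.complex.d 2 1 y) = 0 := fun y => ConcreteCategory.congr_hom hψ y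
    set D1 := (P.complex.d 1 0).hom with hD1
    have hψker : LinearMap.ker D1 ≤ LinearMap.ker ψ.hom := by
      intro z hz
      rw [← hex1] at hz
      obtain ⟨y, rfl⟩ := hz
      exact hψ' y
    set N := LinearMap.range D1 with hN
    let φ : N →ₗ[R] K :=
      Submodule.liftQ _ ψ.hom hψker ∘ₗ
        D1.quotKerEquivRange.symm.toLinearMap
    have hφ : ∀ y : P.complex.X 1, φ ⟨D1 y, ⟨y, rfl⟩⟩ = ψ y := by
      intro y
      have h1 : D1.quotKerEquivRange (Submodule.Quotient.mk y) = ⟨D1 y, ⟨y, rfl⟩⟩ :=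
        Subtype.ext (D1.quotKerEquivRange_apply_mk y)
      have h2 : D1.quotKerEquivRange.symm ⟨D1 y, ⟨y, rfl⟩⟩ = Submodule.Quotient.mk y := by
        rw [← h1, LinearEquiv.symm_apply_apply]
      show Submodule.liftQ _ _ hψker (D1.quotKerEquivRange.symm ⟨D1 y, ⟨y, rfl⟩⟩) = ψ y
      rw [h2, Submodule.liftQ_apply]
    let relmap : N →ₗ[R] K × P.complex.X 0 := φ.prod (-(N.subtype))
    set rel := LinearMap.range relmap with hrel
    let i' : K →ₗ[R] (K × P.complex.X 0) ⧸ rel := rel.mkQ ∘ₗ LinearMap.inl R K (P.complex.X 0)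
    have hεrel : rel ≤ LinearMap.ker (ε.hom ∘ₗ
        LinearMap.snd R K (P.complex.X 0)) := by
      rintro - ⟨n, rfl⟩
      show ε (-(n : P.complex.X 0)) = 0
      rw [map_neg, neg_eq_zero]
      have : (n : P.complex.X 0) ∈ LinearMap.ker ε.hom := by rw [← hex0]; exact n.2
      exact this
    let π' : ((K × P.complex.X 0) ⧸ rel) →ₗ[R] A := Submodule.liftQ rel _ hεrel
    have hi' : Function.Injective i' := by
      rw [← LinearMap.ker_eq_bot]
      rw [Submodule.eq_bot_iff]
      intro k hk
      have : (k, (0 : P.complex.X 0)) ∈ rel := by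
        rwa [LinearMap.mem_ker, LinearMap.comp_apply, Submodule.mkQ_apply,
          Submodule.Quotient.mk_eq_zero] at hk
      obtain ⟨n, hn⟩ := this
      have hn2 : -(n : P.complex.X 0) = 0 := congrArg Prod.snd hn
      have hn0 : n = 0 := by
        apply Subtype.ext
        simpa [neg_eq_zero] using hn2
      have hk1 : φ n = k := congrArg Prod.fst hn
      rw [hn0, map_zero] at hk1
      exact hk1.symm
    have hπ'surj : Function.Surjective π' := by
      intro a
      obtain ⟨x, hx⟩ := hεsurj a
      exact ⟨rel.mkQ (0, x), hx⟩
    have hker' : LinearMap.ker π' = LinearMap.range i' := by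
      apply le_antisymm
      · intro q hq
        obtain ⟨⟨k, p⟩, rfl⟩ := rel.mkQ_surjective q
        have hp : ε p = 0 := hq
        have hpN : p ∈ N := by rw [hex0]; exact hp
        refine ⟨k + φ ⟨p, hpN⟩, ?_⟩
        show rel.mkQ (k + φ ⟨p, hpN⟩, 0) = rel.mkQ (k, p)
        rw [Submodule.mkQ_apply, Submodule.mkQ_apply, Submodule.Quotient.eq]
        refine ⟨⟨p, hpN⟩, ?_⟩
        have hrm2 : relmap ⟨p, hpN⟩ = (φ ⟨p, hpN⟩, -p) := rfl
        rw [hrm2, Prod.mk_sub_mk, add_sub_cancel_left, zero_sub]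
      · rintro - ⟨k, rfl⟩
        show ε ((0 : P.complex.X 0)) = 0
        exact map_zero _
    obtain ⟨s, hs⟩ := hsplit ((K × P.complex.X 0) ⧸ rel) inferInstance inferInstance
      i' π' hi' hπ'surj hker'
    obtain ⟨r, hr⟩ := exists_retraction i' π' hi' hker' s hs
    have hri : ∀ k, r (i' k) = k := fun k => DFunLike.congr_fun hr k
    refine ⟨ModuleCat.ofHom (r ∘ₗ rel.mkQ ∘ₗ LinearMap.inr R K (P.complex.X 0)), ?_⟩
    apply ModuleCat.hom_ext
    apply LinearMap.ext
    intro y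
    show r (rel.mkQ (0, D1 y)) = ψ y
    have hq : rel.mkQ (0, D1 y) = i' (ψ y) := by
      show rel.mkQ (0, D1 y) = rel.mkQ (ψ y, 0)
      rw [Submodule.mkQ_apply, Submodule.mkQ_apply, Submodule.Quotient.eq]
      refine ⟨-⟨D1 y, ⟨y, rfl⟩⟩, ?_⟩
      rw [map_neg]
      have hrm : relmap ⟨D1 y, ⟨y, rfl⟩⟩ = (ψ y, -(D1 y)) := by
        show (φ ⟨D1 y, ⟨y, rfl⟩⟩, -(D1 y)) = _
        rw [hφ]
      rw [hrm, Prod.neg_mk, neg_neg, Prod.mk_sub_mk, zero_sub, sub_zero]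
    rw [hq, hri]

end KeyLemma

section Assembly

variable {R : Type u} [CommRing R] {K : Type u} [AddCommGroup K] [Module R K]

/-- `SplitsAll` passes to direct sums (coproducts) in the first variable. -/
theorem SplitsAll.finsupp {E : Type u} [AddCommGroup E] [Module R E] (β : Type u)
    (h : SplitsAll R E K) : SplitsAll R (β →₀ E) K := by
  intro X _ _ i π hi hπ hker
  have key : ∀ b : β, ∃ σ : E →ₗ[R] X, ∀ e, π (σ e) = Finsupp.single b e := by
    intro b
    set Xb := Submodule.comap π (LinearMap.range (Finsupp.lsingle b : E →ₗ[R] β →₀ E)) with hXb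
    have himem : ∀ k, i k ∈ Xb := by
      intro k
      have : π (i k) = 0 := by
        have : i k ∈ LinearMap.ker π := by rw [hker]; exact ⟨k, rfl⟩
        exact this
      rw [hXb, Submodule.mem_comap, this]
      exact ⟨0, map_zero _⟩
    let ib : K →ₗ[R] Xb := i.codRestrict Xb himem
    let πb : Xb →ₗ[R] E := (Finsupp.lapply b) ∘ₗ π ∘ₗ Xb.subtype
    have hib : Function.Injective ib := by
      intro k1 k2 hk
      exact hi (congrArg Subtype.val hk)
    have hπb : Function.Surjective πb := by
      intro e
      obtain ⟨x, hx⟩ := hπ (Finsupp.single b e)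
      refine ⟨⟨x, ?_⟩, ?_⟩
      · rw [hXb, Submodule.mem_comap, hx]
        exact ⟨e, rfl⟩
      · show (π x) b = e
        rw [hx, Finsupp.single_eq_same]
    have hkerb : LinearMap.ker πb = LinearMap.range ib := by
      apply le_antisymm
      · rintro ⟨x, hx⟩ hk
        obtain ⟨e, he⟩ := hx
        have hb : (π x) b = 0 := hk
        have : π x = 0 := by
          rw [← he] at hb ⊢
          rw [Finsupp.lsingle_apply] at hb ⊢
          rw [Finsupp.single_eq_same] at hb
          rw [hb, Finsupp.single_zero]
        have : x ∈ LinearMap.ker π := this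
        rw [hker] at this
        obtain ⟨k, hkx⟩ := this
        exact ⟨k, Subtype.ext hkx⟩
      · rintro - ⟨k, rfl⟩
        show (π (i k)) b = 0
        have : i k ∈ LinearMap.ker π := by rw [hker]; exact ⟨k, rfl⟩
        have : π (i k) = 0 := this
        rw [this]
        rfl
    obtain ⟨sb, hsb⟩ := h Xb inferInstance inferInstance ib πb hib hπb hkerb
    refine ⟨Xb.subtype ∘ₗ sb, ?_⟩
    intro e
    obtain ⟨c, hc⟩ := (sb e).2
    have hcoeff : (π ((sb e) : X)) b = e := by
      have := DFunLike.congr_fun hsb e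
      exact this
    rw [Finsupp.lsingle_apply] at hc
    show π ((sb e : X)) = _
    rw [← hc] at hcoeff ⊢
    rw [Finsupp.single_eq_same] at hcoeff
    rw [hcoeff]
  choose σ hσ using key
  refine ⟨Finsupp.lsum ℕ σ, ?_⟩
  apply Finsupp.lhom_ext
  intro b e
  show π ((Finsupp.lsum ℕ σ) (Finsupp.single b e)) = Finsupp.single b e
  rw [Finsupp.lsum_single, hσ]

/-- `SplitsAll` is stable under extensions: given `0 → J → M → M/J → 0`. -/
theorem SplitsAll.of_ses {J M : Type u} [AddCommGroup J] [Module R J]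
    [AddCommGroup M] [Module R M] (j : J →ₗ[R] M) (hj : Function.Injective j)
    (hJ : SplitsAll R J K) (hC : SplitsAll R (M ⧸ LinearMap.range j) K) :
    SplitsAll R M K := by
  intro X _ _ i π hi hπ hker
  -- Step 1: produce `σ : J →ₗ X` with `π ∘ σ = j`.
  set XJ := Submodule.comap π (LinearMap.range j) with hXJ
  let eJ := LinearEquiv.ofInjective j hj
  let πJ : XJ →ₗ[R] J := eJ.symm.toLinearMap ∘ₗ
    LinearMap.codRestrict (LinearMap.range j) (π ∘ₗ XJ.subtype) (fun x => x.2)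
  have hjπJ : ∀ x : XJ, j (πJ x) = π (x : X) := by
    intro x
    show j (eJ.symm ⟨π (x : X), x.2⟩) = _
    have := congrArg Subtype.val (eJ.apply_symm_apply ⟨π (x : X), x.2⟩)
    exact this
  have himem : ∀ k, i k ∈ XJ := by
    intro k
    have : π (i k) = 0 := by
      have : i k ∈ LinearMap.ker π := by rw [hker]; exact ⟨k, rfl⟩
      exact this
    rw [hXJ, Submodule.mem_comap, this]
    exact ⟨0, map_zero _⟩
  let iJ : K →ₗ[R] XJ := i.codRestrict XJ himem
  have hiJ : Function.Injective iJ := fun k1 k2 hk => hi (congrArg Subtype.val hk)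
  have hπJ : Function.Surjective πJ := by
    intro a
    obtain ⟨x, hx⟩ := hπ (j a)
    have hxm : x ∈ XJ := by rw [hXJ, Submodule.mem_comap, hx]; exact ⟨a, rfl⟩
    refine ⟨⟨x, hxm⟩, ?_⟩
    apply hj
    rw [hjπJ]
    exact hx
  have hkerJ : LinearMap.ker πJ = LinearMap.range iJ := by
    apply le_antisymm
    · rintro ⟨x, hx⟩ hk
      have : π x = j (πJ ⟨x, hx⟩) := (hjπJ ⟨x, hx⟩).symm
      rw [show πJ ⟨x, hx⟩ = 0 from hk, map_zero] at this
      have : x ∈ LinearMap.ker π := this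
      rw [hker] at this
      obtain ⟨k, hkx⟩ := this
      exact ⟨k, Subtype.ext hkx⟩
    · rintro - ⟨k, rfl⟩
      apply hj
      rw [hjπJ, map_zero]
      show π (i k) = 0
      have : i k ∈ LinearMap.ker π := by rw [hker]; exact ⟨k, rfl⟩
      exact this
  obtain ⟨sJ, hsJ⟩ := hJ XJ inferInstance inferInstance iJ πJ hiJ hπJ hkerJ
  let σ : J →ₗ[R] X := XJ.subtype ∘ₗ sJ
  have hσ : ∀ a, π (σ a) = j a := by
    intro a
    have h1 : πJ (sJ a) = a := DFunLike.congr_fun hsJ a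
    have := hjπJ (sJ a)
    rw [h1] at this
    exact this.symm
  -- Step 2: pass to the quotient by `range σ`.
  set T := LinearMap.range σ with hT
  have hmapq : T ≤ Submodule.comap π (LinearMap.range j) := by
    rintro - ⟨a, rfl⟩
    rw [Submodule.mem_comap, hσ]
    exact ⟨a, rfl⟩
  let π2 : (X ⧸ T) →ₗ[R] (M ⧸ LinearMap.range j) :=
    Submodule.mapQ T (LinearMap.range j) π hmapq
  let i2 : K →ₗ[R] X ⧸ T := T.mkQ ∘ₗ i
  have hi2 : Function.Injective i2 := by
    rw [← LinearMap.ker_eq_bot, Submodule.eq_bot_iff]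
    intro k hk
    have : i k ∈ T := by
      rwa [LinearMap.mem_ker, LinearMap.comp_apply, Submodule.mkQ_apply,
        Submodule.Quotient.mk_eq_zero] at hk
    obtain ⟨a, ha⟩ := this
    have h0 : j a = 0 := by
      rw [← hσ]
      rw [ha]
      have : i k ∈ LinearMap.ker π := by rw [hker]; exact ⟨k, rfl⟩
      exact this
    have ha0 : a = 0 := hj (by rw [h0, map_zero])
    rw [ha0, map_zero] at ha
    exact hi (by rw [← ha, map_zero])
  have hπ2 : Function.Surjective π2 := by
    intro c
    obtain ⟨m, rfl⟩ := Submodule.Quotient.mk_surjective _ c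
    obtain ⟨x, hx⟩ := hπ m
    refine ⟨T.mkQ x, ?_⟩
    show Submodule.Quotient.mk (π x) = Submodule.Quotient.mk m
    rw [hx]
  have hker2 : LinearMap.ker π2 = LinearMap.range i2 := by
    apply le_antisymm
    · intro q hq
      obtain ⟨x, rfl⟩ := T.mkQ_surjective q
      have hq' : Submodule.Quotient.mk (π x) = (0 : M ⧸ LinearMap.range j) := hq
      rw [Submodule.Quotient.mk_eq_zero] at hq'
      obtain ⟨a, ha⟩ := hq'
      have : x - σ a ∈ LinearMap.ker π := by
        rw [LinearMap.mem_ker, map_sub, hσ, ha, sub_self]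
      rw [hker] at this
      obtain ⟨k, hkx⟩ := this
      refine ⟨k, ?_⟩
      show T.mkQ (i k) = T.mkQ x
      rw [Submodule.mkQ_apply, Submodule.mkQ_apply, Submodule.Quotient.eq, hkx]
      exact ⟨-a, by rw [map_neg]; abel⟩
    · rintro - ⟨k, rfl⟩
      show Submodule.Quotient.mk (π (i k)) = (0 : M ⧸ LinearMap.range j)
      have : π (i k) = 0 := by
        have : i k ∈ LinearMap.ker π := by rw [hker]; exact ⟨k, rfl⟩
        exact this
      rw [this]
      rfl
  obtain ⟨s2, hs2⟩ := hC (X ⧸ T) inferInstance inferInstance i2 π2 hi2 hπ2 hker2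
  obtain ⟨r2, hr2⟩ := exists_retraction i2 π2 hi2 hker2 s2 hs2
  have : (r2 ∘ₗ T.mkQ) ∘ₗ i = LinearMap.id := by
    apply LinearMap.ext
    intro k
    exact DFunLike.congr_fun hr2 k
  exact exists_section i π hπ hker (r2 ∘ₗ T.mkQ) this

/-- `SplitsAll` passes from a direct sum of copies of `Q` to `Q` itself. -/
theorem SplitsAll.of_finsupp_self {α Q : Type u} [AddCommGroup Q] [Module R Q] (a₀ : α)
    (h : SplitsAll R (α →₀ Q) K) : SplitsAll R Q K := by
  intro X _ _ i π hi hπ hker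
  let ρ : (α →₀ Q) →ₗ[R] Q := Finsupp.lapply a₀
  set Xt := LinearMap.ker ((π ∘ₗ LinearMap.fst R X (α →₀ Q)) -
    (ρ ∘ₗ LinearMap.snd R X (α →₀ Q))) with hXt
  have hmem : ∀ p : X × (α →₀ Q), p ∈ Xt ↔ π p.1 = ρ p.2 := by
    intro p
    rw [hXt, LinearMap.mem_ker, LinearMap.sub_apply, sub_eq_zero]
    rfl
  let πt : Xt →ₗ[R] (α →₀ Q) := (LinearMap.snd R X (α →₀ Q)) ∘ₗ Xt.subtype
  have himem : ∀ k, (i k, (0 : α →₀ Q)) ∈ Xt := by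
    intro k
    rw [hmem]
    show π (i k) = ρ 0
    have : i k ∈ LinearMap.ker π := by rw [hker]; exact ⟨k, rfl⟩
    rw [show π (i k) = 0 from this, map_zero]
  let it : K →ₗ[R] Xt := LinearMap.codRestrict Xt ((LinearMap.inl R X (α →₀ Q)) ∘ₗ i)
    (fun k => himem k)
  have hit : Function.Injective it := by
    intro k1 k2 hk
    have := congrArg (fun x : Xt => (x : X × (α →₀ Q)).1) hk
    exact hi this
  have hπt : Function.Surjective πt := by
    intro f
    obtain ⟨x, hx⟩ := hπ (ρ f)
    exact ⟨⟨(x, f), (hmem _).2 hx⟩, rfl⟩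
  have hkert : LinearMap.ker πt = LinearMap.range it := by
    apply le_antisymm
    · rintro ⟨⟨x, f⟩, hxf⟩ hk
      have hf : f = 0 := hk
      have : π x = 0 := by
        have := (hmem _).1 hxf
        rw [hf, map_zero] at this
        exact this
      have : x ∈ LinearMap.ker π := this
      rw [hker] at this
      obtain ⟨k, hkx⟩ := this
      refine ⟨k, Subtype.ext ?_⟩
      show (i k, (0 : α →₀ Q)) = (x, f)
      rw [hkx, hf]
    · rintro - ⟨k, rfl⟩
      rfl
  obtain ⟨st, hst⟩ := h Xt inferInstance inferInstance it πt hit hπt hkert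
  refine ⟨(LinearMap.fst R X (α →₀ Q)) ∘ₗ Xt.subtype ∘ₗ st ∘ₗ Finsupp.lsingle a₀, ?_⟩
  apply LinearMap.ext
  intro q
  have h1 : πt (st (Finsupp.single a₀ q)) = Finsupp.single a₀ q :=
    DFunLike.congr_fun hst _
  have h2 := (hmem ((st (Finsupp.single a₀ q)) : X × (α →₀ Q))).1
    (st (Finsupp.single a₀ q)).2
  show π ((st (Finsupp.single a₀ q) : X × (α →₀ Q)).1) = q
  rw [h2]
  show ((st (Finsupp.single a₀ q) : X × (α →₀ Q)).2) a₀ = q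
  have h3 : ((st (Finsupp.single a₀ q) : X × (α →₀ Q)).2) = Finsupp.single a₀ q := h1
  rw [h3, Finsupp.single_eq_same]

end Assembly

/-- Let `R` be Dedekind, `p` maximal, `E = E(R/p)` the injective hull of `R/p`, and
`J_p` the `p`-adic completion of a free module over the localization `R_p`, sitting in
an exact sequence `0 → J_p → Q^{(α)} → I_p → 0` with `I_p` a direct sum of copies of
`E(R/p)` and `α > 0`.  If `Ext¹(E(R/p), K) = 0` and `Ext¹(J_p, K) = 0` then
`Ext¹(Q, K) = 0`, i.e. `K` is cotorsion. -/
theorem cotorsion_of_ext_injHull_adicCompletion (R : Type u) [CommRing R] [IsDomain R]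
    [IsDedekindDomain R] (p : Ideal R) [p.IsPrime] (hp : p.IsMaximal)
    (K : Type u) [AddCommGroup K] [Module R K]
    -- `E` is an injective hull of `R/p`:
    (E : Type u) [AddCommGroup E] [Module R E] (hInj : Module.Injective R E)
    (hEss : ∃ f : (R ⧸ p) →ₗ[R] E, Function.Injective f ∧
      ∀ N : Submodule R E, N ≠ ⊥ → N ⊓ LinearMap.range f ≠ ⊥)
    -- `J_p`, the `p`-adic completion of a free module over the localization at `p`:
    (ι : Type u) (J : Type u) [AddCommGroup J] [Module R J]
    (hJ : Nonempty (J ≃ₗ[R] AdicCompletion p (ι →₀ Localization.AtPrime p)))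
    -- the exact sequence `0 → J → Q^{(α)} → I_p → 0` with `I_p ≅ ⨁_β E` and `α > 0`:
    (α β : Type u) (hα : Nonempty α)
    (j : J →ₗ[R] (α →₀ FractionRing R)) (hj : Function.Injective j)
    (hcoker : Nonempty (((α →₀ FractionRing R) ⧸ LinearMap.range j) ≃ₗ[R] (β →₀ E)))
    (hE : Ext1Zero R E K) (hJK : Ext1Zero R J K) :
    Ext1Zero R (FractionRing R) K := by
  have hsE : SplitsAll R E K := (ext1Zero_iff_splitsAll R E K).1 hE
  have hsJ : SplitsAll R J K := (ext1Zero_iff_splitsAll R J K).1 hJK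
  have hsE' : SplitsAll R (β →₀ E) K := hsE.finsupp β
  have hsC : SplitsAll R ((α →₀ FractionRing R) ⧸ LinearMap.range j) K :=
    hsE'.of_equiv hcoker.some.symm
  have hsM : SplitsAll R (α →₀ FractionRing R) K := SplitsAll.of_ses j hj hsJ hsC
  have hsQ : SplitsAll R (FractionRing R) K := hsM.of_finsupp_self hα.some
  exact (ext1Zero_iff_splitsAll R (FractionRing R) K).2 hsQ
end
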